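/- Let Σ be a unimodular fan in ℝ^n. Then the abelian group A¹(Σ) is torsion-free if and only if the subgroup of ℤ^n generated by the primitive generators {e_ρ : ρ ∈ Σ₁} of the rays of Σ equals ℤ^n ∩ span_ℝ(|Σ|), where |Σ| := ⋃_{σ∈Σ} σ. -/

import Mathlib

/- Formalization of polyhedral-geometry notions: rational fans in ℝⁿ with lattice ℤⁿ,
tropical fans (balancing condition), conewise integral linear functions, Minkowski
weights, etc., following the paper "Homology of tropical fans" by Amini–Piquerez. -/

open Classical MvPolynomial
open scoped TensorProduct DirectSum

noncomputable section

/-- The ambient space `ℝ^n`. -/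
abbrev V (n : ℕ) : Type := Fin n → ℝ

/-- The inclusion of the lattice `ℤ^n` into `ℝ^n`. -/
def intVec {n : ℕ} (v : Fin n → ℤ) : V n := fun i => (v i : ℝ)

lemma intVec_zero {n : ℕ} : intVec (0 : Fin n → ℤ) = 0 := by
  funext i; simp [intVec]

lemma intVec_add {n : ℕ} (a b : Fin n → ℤ) : intVec (a + b) = intVec a + intVec b := by
  funext i; simp [intVec]

lemma intVec_neg {n : ℕ} (a : Fin n → ℤ) : intVec (-a) = -intVec a := by
  funext i; simp [intVec]

/-- The pairing between `M = Hom(ℤ^n, ℤ)` (an element of which is represented by its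
coefficient vector) and the lattice `ℤ^n`. -/
def pairZ {n : ℕ} (ℓ v : Fin n → ℤ) : ℤ := ∑ i, ℓ i * v i

/-- The pairing between an element of `M` and a vector of `ℝ^n`, i.e. the linear form
on `ℝ^n` defined by an element of `M`. -/
def pairR {n : ℕ} (ℓ : Fin n → ℤ) (x : V n) : ℝ := ∑ i, (ℓ i : ℝ) * x i

/-- `σ` is a rational cone: the set of nonnegative combinations of a finite set of
integer vectors. -/
def IsRationalCone {n : ℕ} (σ : Set (V n)) : Prop :=
  ∃ S : Finset (Fin n → ℤ),
    σ = {x | ∃ lam : (Fin n → ℤ) → ℝ, (∀ v, 0 ≤ lam v) ∧ x = ∑ v ∈ S, lam v • intVec v}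

/-- A cone is strongly convex if `σ ∩ (-σ) = {0}`. -/
def StronglyConvex {n : ℕ} (σ : Set (V n)) : Prop := σ ∩ (-σ) = {0}

/-- `τ` is a face of the cone `σ`: `τ = σ ∩ ker ℓ` for a linear form `ℓ` nonnegative
on `σ`. -/
def IsFaceOf {n : ℕ} (τ σ : Set (V n)) : Prop :=
  ∃ ℓ : (V n) →ₗ[ℝ] ℝ, (∀ x ∈ σ, 0 ≤ ℓ x) ∧ τ = σ ∩ {x | ℓ x = 0}

/-- A (rational) fan in `ℝ^n`: a finite nonempty collection of strongly convex rational
cones, closed under taking faces, such that the intersection of any two cones is a face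
of each of them. -/
structure IsFan {n : ℕ} (F : Finset (Set (V n))) : Prop where
  nonempty : F.Nonempty
  rat : ∀ σ ∈ F, IsRationalCone σ
  convex : ∀ σ ∈ F, StronglyConvex σ
  faces_mem : ∀ σ ∈ F, ∀ τ : Set (V n), IsFaceOf τ σ → τ ∈ F
  inter_face_left : ∀ σ ∈ F, ∀ σ' ∈ F, IsFaceOf (σ ∩ σ') σ
  inter_face_right : ∀ σ ∈ F, ∀ σ' ∈ F, IsFaceOf (σ ∩ σ') σ'

/-- The dimension of a cone: the dimension of its real linear span. -/
def dimC {n : ℕ} (σ : Set (V n)) : ℕ := Module.finrank ℝ ↥(Submodule.span ℝ σ)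

/-- `v ∈ N_σ := ℤ^n ∩ span_ℝ(σ)`. -/
def memLat {n : ℕ} (σ : Set (V n)) (v : Fin n → ℤ) : Prop :=
  intVec v ∈ Submodule.span ℝ σ

/-- `v` is a normal vector `n_{σ/τ}` for the codimension-one face `τ` of `σ`:
`v ∈ N_σ ∩ (σ + span_ℝ(τ))` and `N_τ + ℤ·v = N_σ`. -/
def IsNormalVector {n : ℕ} (σ τ : Set (V n)) (v : Fin n → ℤ) : Prop :=
  memLat σ v ∧ (∃ y ∈ σ, ∃ z ∈ Submodule.span ℝ τ, intVec v = y + z) ∧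
  ∀ w : Fin n → ℤ, memLat σ w ↔ ∃ u : Fin n → ℤ, ∃ k : ℤ, memLat τ u ∧ w = u + k • v

/-- The cones of `F` of dimension `d` containing `τ`. -/
def facets {n : ℕ} (F : Finset (Set (V n))) (d : ℕ) (τ : Set (V n)) :
    Finset (Set (V n)) :=
  F.filter fun σ => dimC σ = d ∧ τ ⊆ σ

/-- `Σ_k`: the `k`-dimensional cones of the fan. -/
def conesK {n : ℕ} (F : Finset (Set (V n))) (k : ℕ) : Finset (Set (V n)) :=
  F.filter fun σ => dimC σ = k

/-- A tropical fan of pure dimension `d`: a rational fan, pure of dimension `d`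
(every maximal cone has dimension `d`), satisfying the balancing condition: for every
`τ ∈ Σ_{d-1}` and any choice of normal vectors, `∑_{σ ⊃ τ} n_{σ/τ} ∈ N_τ`. -/
def IsTropicalFan {n : ℕ} (F : Finset (Set (V n))) (d : ℕ) : Prop :=
  IsFan F ∧ (∀ σ ∈ F, (∀ η ∈ F, σ ⊆ η → σ = η) → dimC σ = d) ∧
  ∀ τ ∈ F, dimC τ = d - 1 →
    ∀ v : Set (V n) → Fin n → ℤ,
      (∀ σ ∈ facets F d τ, IsNormalVector σ τ (v σ)) →
      memLat τ (∑ σ ∈ facets F d τ, v σ)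

/-- `f` is conewise integral linear on the fan `F`: on each cone it agrees with an
element of `M`. -/
def ConewiseLinear {n : ℕ} (F : Finset (Set (V n))) (f : V n → ℝ) : Prop :=
  ∀ σ ∈ F, ∃ ℓ : Fin n → ℤ, ∀ x ∈ σ, f x = pairR ℓ x

/-- A Minkowski weight of dimension `k` on the fan `F`: an integer weight on `Σ_k`
satisfying the balancing condition. -/
def IsMinkowskiWeight {n : ℕ} (F : Finset (Set (V n))) (k : ℕ) (w : Set (V n) → ℤ) :
    Prop :=
  ∀ τ ∈ F, dimC τ = k - 1 →
    ∀ u : Set (V n) → Fin n → ℤ,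
      (∀ σ ∈ facets F k τ, IsNormalVector σ τ (u σ)) →
      memLat τ (∑ σ ∈ facets F k τ, w σ • u σ)

/-- The rays (one-dimensional cones) of the fan. -/
def raysF {n : ℕ} (F : Finset (Set (V n))) : Finset (Set (V n)) :=
  F.filter fun ρ => dimC ρ = 1

/-- The type of rays of the fan `F`. -/
abbrev RayT {n : ℕ} (F : Finset (Set (V n))) : Type := {ρ : Set (V n) // ρ ∈ raysF F}

/-- The rays of the cone `σ` in the fan `F`. -/
def raysOfCone {n : ℕ} (F : Finset (Set (V n))) (σ : Set (V n)) :
    Finset (Set (V n)) :=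
  (raysF F).filter fun ρ => ρ ⊆ σ

/-- The fan `F` is simplicial: every cone has exactly `dim σ` rays and is generated by
them (every element of `σ` is a sum of elements of the rays of `σ`). -/
def IsSimplicial {n : ℕ} (F : Finset (Set (V n))) : Prop :=
  ∀ σ ∈ F, (raysOfCone F σ).card = dimC σ ∧
    σ = {x | ∃ y : Set (V n) → V n, (∀ ρ ∈ raysOfCone F σ, y ρ ∈ ρ) ∧
             x = ∑ ρ ∈ raysOfCone F σ, y ρ}

/-- `v = e_ρ` is the primitive generator of the ray `ρ`: the generator of the rank-one
lattice `N_ρ` lying in `ρ`. -/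
def IsPrimitiveGen {n : ℕ} (ρ : Set (V n)) (v : Fin n → ℤ) : Prop :=
  v ≠ 0 ∧ intVec v ∈ ρ ∧ ∀ w : Fin n → ℤ, memLat ρ w → ∃ k : ℤ, w = k • v

/-- The fan `F` with primitive ray generators `e` is unimodular: simplicial, and for
every cone `σ`, the vectors `e_ρ`, `ρ` a ray of `σ`, form a `ℤ`-basis of `N_σ`. -/
def IsUnimodular {n : ℕ} (F : Finset (Set (V n))) (e : Set (V n) → Fin n → ℤ) : Prop :=
  IsSimplicial F ∧
  ∀ σ ∈ F, ∀ w : Fin n → ℤ, memLat σ w →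
    ∃! c : Set (V n) → ℤ, (∀ ρ, ρ ∉ raysOfCone F σ → c ρ = 0) ∧
      w = ∑ ρ ∈ raysOfCone F σ, c ρ • e ρ

/-- The monomial `x_σ = ∏_{ρ ray of σ} x_ρ` in the polynomial ring on the rays. -/
def xCone {n : ℕ} (F : Finset (Set (V n))) (σ : Set (V n)) :
    MvPolynomial (RayT F) ℤ :=
  ∏ ρ ∈ Finset.univ.filter (fun ρ : RayT F => ρ.1 ⊆ σ), X ρ

/-- The finite set `S` of rays forms the set of rays of a cone of `F`. -/
def FormsCone {n : ℕ} (F : Finset (Set (V n))) (S : Finset (RayT F)) : Prop :=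
  ∃ σ ∈ F, ∀ ρ : RayT F, ρ ∈ S ↔ ρ.1 ⊆ σ

/-- The ideal `I` generated by the monomials `x_{ρ₁} ⋯ x_{ρ_k}` over subsets of
distinct rays not forming the set of rays of a cone of `F`. -/
def idealI {n : ℕ} (F : Finset (Set (V n))) : Ideal (MvPolynomial (RayT F) ℤ) :=
  Ideal.span {p | ∃ S : Finset (RayT F), ¬ FormsCone F S ∧ p = ∏ ρ ∈ S, X ρ}

/-- The linear polynomial `x_ℓ = ∑_ρ ℓ(e_ρ) x_ρ` associated with `ℓ ∈ M`. -/
def xLin {n : ℕ} (F : Finset (Set (V n))) (e : Set (V n) → Fin n → ℤ)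
    (ℓ : Fin n → ℤ) : MvPolynomial (RayT F) ℤ :=
  ∑ ρ : RayT F, C (pairZ ℓ (e ρ.1)) * X ρ

/-- The ideal `J` generated by the linear polynomials `∑_ρ ℓ(e_ρ) x_ρ`, `ℓ ∈ M`. -/
def idealJ {n : ℕ} (F : Finset (Set (V n))) (e : Set (V n) → Fin n → ℤ) :
    Ideal (MvPolynomial (RayT F) ℤ) :=
  Ideal.span {p | ∃ ℓ : Fin n → ℤ, p = xLin F e ℓ}

/-- The defining ideal `I + J` of the Chow ring. -/
def chowIdeal {n : ℕ} (F : Finset (Set (V n))) (e : Set (V n) → Fin n → ℤ) :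
    Ideal (MvPolynomial (RayT F) ℤ) := idealI F + idealJ F e

/-- The Chow ring `A•(Σ) = ℤ[x_ρ : ρ ∈ Σ₁]/(I + J)`. -/
abbrev ChowRing {n : ℕ} (F : Finset (Set (V n))) (e : Set (V n) → Fin n → ℤ) : Type :=
  MvPolynomial (RayT F) ℤ ⧸ chowIdeal F e

/-- The subgroup `Z^k(Σ) = ⊕_{σ ∈ Σ_k} ℤ·x_σ` of the polynomial ring. -/
def Zgroup {n : ℕ} (F : Finset (Set (V n))) (k : ℕ) :
    AddSubgroup (MvPolynomial (RayT F) ℤ) :=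
  AddSubgroup.closure {p | ∃ σ ∈ conesK F k, p = xCone F σ}

/-- The degree-`k` graded piece `A^k(Σ)` of the Chow ring: the image of the homogeneous
polynomials of degree `k` in the quotient. -/
def Apiece {n : ℕ} (F : Finset (Set (V n))) (e : Set (V n) → Fin n → ℤ) (k : ℕ) :
    AddSubgroup (ChowRing F e) :=
  AddSubgroup.closure
    {y | ∃ P : MvPolynomial (RayT F) ℤ, P.IsHomogeneous k ∧
         y = Ideal.Quotient.mk (chowIdeal F e) P}

/-- The inclusion `ℤ^n → ℝ^n` as a homomorphism of additive groups. -/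
def intVecHom (n : ℕ) : (Fin n → ℤ) →+ V n where
  toFun := intVec
  map_zero' := intVec_zero
  map_add' := intVec_add

/-- The support `|Σ| = ⋃_{σ ∈ Σ} σ` of the fan. -/
def suppF {n : ℕ} (F : Finset (Set (V n))) : Set (V n) :=
  ⋃₀ (F : Set (Set (V n)))


set_option linter.unusedSectionVars false
set_option maxHeartbeats 1600000

section Poly
variable {σ : Type*} [Fintype σ]

lemma finsupp_degree_single_one (ρ : σ) : (Finsupp.single ρ 1 : σ →₀ ℕ).degree = 1 := by
  classical
  exact Finsupp.degree_single ρ 1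

lemma degree_one_single {d : σ →₀ ℕ} (h : d.degree = 1) : ∃ ρ, d = Finsupp.single ρ 1 := by
  classical
  rw [Finsupp.degree_apply] at h
  have hne : d.support.Nonempty := by
    by_contra h0
    rw [Finset.not_nonempty_iff_eq_empty] at h0
    rw [h0] at h
    simp at h
  obtain ⟨ρ, hρ⟩ := hne
  have hle : d ρ ≤ 1 := h ▸ Finset.single_le_sum (fun i _ => Nat.zero_le (d i)) hρ
  have hdρ : d ρ = 1 :=
    le_antisymm hle (Nat.one_le_iff_ne_zero.mpr (Finsupp.mem_support_iff.mp hρ))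
  have herase : ∑ i ∈ d.support.erase ρ, d i = 0 := by
    have h2 := Finset.sum_erase_add d.support d hρ
    omega
  have hall : ∀ x, x ≠ ρ → d x = 0 := by
    intro x hx
    by_contra h0
    have hxs : x ∈ d.support.erase ρ :=
      Finset.mem_erase.mpr ⟨hx, Finsupp.mem_support_iff.mpr h0⟩
    have h3 := Finset.single_le_sum (f := (d : σ → ℕ)) (fun i _ => Nat.zero_le (d i)) hxs
    omega
  refine ⟨ρ, ?_⟩
  ext x
  rcases eq_or_ne x ρ with rfl | hx
  · simp [hdρ]
  · rw [hall x hx, Finsupp.single_apply, if_neg (fun hh => hx hh.symm)]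

/-- The coefficient extraction in degree one, as a linear map. -/
def thetaL (σ : Type*) [Fintype σ] : MvPolynomial σ ℤ →ₗ[ℤ] (σ → ℤ) where
  toFun P := fun ρ => MvPolynomial.coeff (Finsupp.single ρ 1) P
  map_add' a b := by funext ρ; simp [MvPolynomial.coeff_add]
  map_smul' m a := by
    funext ρ
    show MvPolynomial.coeff (Finsupp.single ρ 1) (m • a) = _
    rw [MvPolynomial.coeff_smul]
    rfl

@[simp] lemma thetaL_apply (P : MvPolynomial σ ℤ) (ρ : σ) :
    thetaL σ P ρ = MvPolynomial.coeff (Finsupp.single ρ 1) P := rfl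

def linOf (c : σ → ℤ) : MvPolynomial σ ℤ := ∑ ρ, MvPolynomial.C (c ρ) * MvPolynomial.X ρ

lemma linOf_isHomogeneous (c : σ → ℤ) : (linOf c).IsHomogeneous 1 := by
  apply MvPolynomial.IsHomogeneous.sum
  intro ρ _
  exact MvPolynomial.isHomogeneous_C_mul_X (c ρ) ρ

lemma coeff_linOf (c : σ → ℤ) (ρ : σ) :
    MvPolynomial.coeff (Finsupp.single ρ 1) (linOf c) = c ρ := by
  classical
  rw [linOf, MvPolynomial.coeff_sum]
  rw [Finset.sum_eq_single ρ (fun ρ' _ hρ' => ?_) (by simp)]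
  · rw [MvPolynomial.coeff_C_mul, MvPolynomial.coeff_X]
    simp
  · rw [MvPolynomial.coeff_C_mul, MvPolynomial.coeff_X', if_neg, mul_zero]
    rw [Finsupp.single_left_inj one_ne_zero]
    exact hρ'

lemma theta_linOf (c : σ → ℤ) : thetaL σ (linOf c) = c := by
  funext ρ
  exact coeff_linOf c ρ

lemma linOf_theta {P : MvPolynomial σ ℤ} (hP : P.IsHomogeneous 1) :
    linOf (thetaL σ P) = P := by
  classical
  apply MvPolynomial.ext
  intro d
  by_cases hd : d.degree = 1
  · obtain ⟨ρ, rfl⟩ := degree_one_single hd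
    rw [coeff_linOf]
    rfl
  · rw [hP.coeff_eq_zero hd, (linOf_isHomogeneous _).coeff_eq_zero hd]

lemma theta_homComp (q : MvPolynomial σ ℤ) :
    thetaL σ (MvPolynomial.homogeneousComponent 1 q) = thetaL σ q := by
  funext ρ
  rw [thetaL_apply, thetaL_apply,
    MvPolynomial.coeff_homogeneousComponent, if_pos (finsupp_degree_single_one ρ)]

lemma homComp_one_mul_of_two {g : MvPolynomial σ ℤ} {dd : ℕ} (hg : g.IsHomogeneous dd)
    (hd : 2 ≤ dd) (a : MvPolynomial σ ℤ) :
    MvPolynomial.homogeneousComponent 1 (a * g) = 0 := by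
  conv_lhs => rw [← MvPolynomial.sum_homogeneousComponent a]
  rw [Finset.sum_mul, map_sum]
  refine Finset.sum_eq_zero fun j _ => ?_
  have hmem : (MvPolynomial.homogeneousComponent j a * g) ∈
      MvPolynomial.homogeneousSubmodule σ ℤ (j + dd) :=
    (MvPolynomial.mem_homogeneousSubmodule _ _).mpr
      ((MvPolynomial.homogeneousComponent_isHomogeneous j a).mul hg)
  rw [MvPolynomial.homogeneousComponent_of_mem hmem, if_neg (by omega)]

lemma homComp_one_mul_of_one {g : MvPolynomial σ ℤ} (hg : g.IsHomogeneous 1)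
    (a : MvPolynomial σ ℤ) :
    MvPolynomial.homogeneousComponent 1 (a * g) =
      MvPolynomial.C (MvPolynomial.coeff 0 a) * g := by
  conv_lhs => rw [← MvPolynomial.sum_homogeneousComponent a]
  rw [Finset.sum_mul, map_sum]
  rw [Finset.sum_eq_single 0 (fun j _ hj => ?_) (fun h0 => ?_)]
  · have hmem : (MvPolynomial.homogeneousComponent 0 a * g) ∈
        MvPolynomial.homogeneousSubmodule σ ℤ (0 + 1) :=
      (MvPolynomial.mem_homogeneousSubmodule _ _).mpr
        ((MvPolynomial.homogeneousComponent_isHomogeneous 0 a).mul hg)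
    rw [MvPolynomial.homogeneousComponent_of_mem hmem, if_pos (by omega),
      MvPolynomial.homogeneousComponent_zero]
  · have hmem : (MvPolynomial.homogeneousComponent j a * g) ∈
        MvPolynomial.homogeneousSubmodule σ ℤ (j + 1) :=
      (MvPolynomial.mem_homogeneousSubmodule _ _).mpr
        ((MvPolynomial.homogeneousComponent_isHomogeneous j a).mul hg)
    rw [MvPolynomial.homogeneousComponent_of_mem hmem, if_neg (by omega)]
  · exact absurd (Finset.mem_range.mpr (Nat.succ_pos _)) h0

end Poly

lemma intVec_zsmul {n : ℕ} (m : ℤ) (a : Fin n → ℤ) :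
    intVec (m • a) = (m : ℝ) • intVec a := by
  funext i; simp [intVec]

lemma intVec_span_le {n : ℕ} {S : Set (Fin n → ℤ)} {x : Fin n → ℤ}
    (hx : x ∈ Submodule.span ℤ S) :
    intVec x ∈ Submodule.span ℝ (intVec '' S) := by
  induction hx using Submodule.span_induction with
  | mem y hy => exact Submodule.subset_span ⟨y, hy, rfl⟩
  | zero =>
      have : intVec (0 : Fin n → ℤ) = 0 := by funext i; simp [intVec]
      rw [this]; exact (Submodule.span ℝ (intVec '' S)).zero_mem
  | add y z _ _ hy hz =>
      rw [show intVec (y + z) = intVec y + intVec z by funext i; simp [intVec]]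
      exact Submodule.add_mem _ hy hz
  | smul m y _ hy => rw [intVec_zsmul]; exact Submodule.smul_mem _ _ hy



def SatSub {A : Type*} [AddCommGroup A] (N : Submodule ℤ A) : Prop :=
  ∀ (x : A) (m : ℤ), m ≠ 0 → m • x ∈ N → x ∈ N

def phiA {n : ℕ} {R : Type*} [Fintype R] (E : R → (Fin n → ℤ)) :
    (Fin n → ℤ) →ₗ[ℤ] (R → ℤ) where
  toFun ℓ := fun ρ => ∑ i, ℓ i * E ρ i
  map_add' a b := by funext ρ; simp [add_mul, Finset.sum_add_distrib]
  map_smul' m a := by funext ρ; simp [Finset.mul_sum, mul_assoc]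

def dotL {R : Type*} [Fintype R] (c : R → ℤ) : (R → ℤ) →ₗ[ℤ] ℤ where
  toFun y := ∑ ρ, y ρ * c ρ
  map_add' a b := by simp [add_mul, Finset.sum_add_distrib]
  map_smul' m a := by simp [Finset.mul_sum, mul_assoc]

lemma pi_sum_single {n : ℕ} (x : Fin n → ℤ) : ∑ k, x k • Pi.single k (1:ℤ) = x := by
  funext l
  rw [Finset.sum_apply]
  simp [Pi.single_apply, mul_ite]


section Core
variable {n r : ℕ} {R : Type*} [Fintype R] {E : R → (Fin n → ℤ)}
  (snf : Module.Basis.SmithNormalForm (Submodule.span ℤ (Set.range E)) (Fin n) r)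

lemma snf_a_ne_zero (i : Fin r) : snf.a i ≠ 0 := by
  intro h
  have h2 := snf.snf i
  rw [h, zero_smul] at h2
  exact snf.bN.ne_zero i (Subtype.ext h2)

lemma snf_bM_li : LinearIndependent ℝ (fun j => intVec (snf.bM j)) := by
  classical
  have hBunit : IsUnit ((Pi.basisFun ℤ (Fin n)).toMatrix snf.bM).det := by
    letI := (Pi.basisFun ℤ (Fin n)).invertibleToMatrix snf.bM
    exact (Matrix.isUnit_iff_isUnit_det _).mp (isUnit_of_invertible _)
  set Bz := ((Pi.basisFun ℤ (Fin n)).toMatrix snf.bM).transpose with hBz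
  have hdet : IsUnit Bz.det := by rw [Matrix.det_transpose]; exact hBunit
  set Ar := Bz.map (Int.cast : ℤ → ℝ) with hAr
  have hdetAr : Ar.det = ((Bz.det : ℤ) : ℝ) := ((Int.castRingHom ℝ).map_det Bz).symm
  have hArunit : IsUnit Ar := by
    rw [Matrix.isUnit_iff_isUnit_det, hdetAr, isUnit_iff_ne_zero]
    rcases Int.isUnit_iff.mp hdet with h | h <;> simp [h]
  have hli := Matrix.linearIndependent_rows_iff_isUnit.mpr hArunit
  have : (fun j => Ar j) = fun j => intVec (snf.bM j) := by
    funext j; funext i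
    simp [hAr, hBz, Matrix.map_apply, Matrix.transpose_apply, Module.Basis.toMatrix_apply,
      Pi.basisFun_repr, intVec]
  rw [← this]; exact hli

lemma snf_mem_iff (x : Fin n → ℤ) :
    x ∈ Submodule.span ℤ (Set.range E) ↔
      (∀ j ∉ Set.range snf.f, snf.bM.repr x j = 0) ∧
      (∀ i, snf.a i ∣ snf.bM.repr x (snf.f i)) := by
  classical
  constructor
  · intro hx
    refine ⟨fun j hj => snf.repr_eq_zero_of_notMem_range (m := ⟨x, hx⟩) hj, fun i => ?_⟩
    have h := snf.repr_apply_embedding_eq_repr_smul (m := ⟨x, hx⟩) (i := i)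
    refine ⟨snf.bN.repr ⟨x, hx⟩ i, ?_⟩
    rw [h, map_smul, Finsupp.smul_apply, smul_eq_mul]
  · rintro ⟨h0, hdvd⟩
    choose q hq using hdvd
    have hx : x = ∑ j, snf.bM.repr x j • snf.bM j := (snf.bM.sum_repr x).symm
    have hsub : (Finset.univ.image snf.f) ⊆ (Finset.univ : Finset (Fin n)) :=
      Finset.subset_univ _
    have hzero : ∀ j ∈ (Finset.univ : Finset (Fin n)), j ∉ Finset.univ.image snf.f →
        snf.bM.repr x j • snf.bM j = 0 := by
      intro j _ hj
      have : j ∉ Set.range snf.f := by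
        intro ⟨i, hi⟩; exact hj (Finset.mem_image.mpr ⟨i, Finset.mem_univ i, hi⟩)
      rw [h0 j this, zero_smul]
    rw [hx, ← Finset.sum_subset hsub hzero,
      Finset.sum_image (fun i _ i' _ h => snf.f.injective h)]
    apply Submodule.sum_mem
    intro i _
    have hco : (snf.a i : ℤ) • snf.bM (snf.f i) = ((snf.bN i : Fin n → ℤ)) := (snf.snf i).symm
    rw [hq i, mul_comm, mul_smul, hco]
    exact Submodule.smul_mem _ _ (snf.bN i).2





lemma snf_N_eq : Submodule.span ℤ (Set.range E) =
    Submodule.span ℤ (Set.range (fun i => (snf.bN i : Fin n → ℤ))) := by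
  have h1 : Submodule.span ℤ (Set.range snf.bN) =
      (⊤ : Submodule ℤ (Submodule.span ℤ (Set.range E))) := snf.bN.span_eq
  have h2 := congrArg (Submodule.map (Submodule.span ℤ (Set.range E)).subtype) h1
  rw [Submodule.map_span, Submodule.map_subtype_top, ← Set.range_comp] at h2
  exact h2.symm

lemma snf_W_eq : Submodule.span ℝ (intVec '' Set.range E) =
    Submodule.span ℝ (Set.range (fun i => intVec (snf.bM (snf.f i)))) := by
  apply le_antisymm
  · rw [Submodule.span_le]
    rintro _ ⟨x, hx, rfl⟩
    have hxN : x ∈ Submodule.span ℤ (Set.range E) := Submodule.subset_span hx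
    rw [snf_N_eq snf] at hxN
    have h3 := intVec_span_le hxN
    have h4 : Submodule.span ℝ (intVec '' Set.range (fun i => (snf.bN i : Fin n → ℤ))) ≤
        Submodule.span ℝ (Set.range (fun i => intVec (snf.bM (snf.f i)))) := by
      rw [Submodule.span_le]
      rintro _ ⟨_, ⟨i, rfl⟩, rfl⟩
      show intVec ((snf.bN i : Fin n → ℤ)) ∈ _
      rw [snf.snf i, intVec_zsmul]
      exact Submodule.smul_mem _ _ (Submodule.subset_span ⟨i, rfl⟩)
    exact h4 h3
  · rw [Submodule.span_le]
    rintro _ ⟨i, rfl⟩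
    have h1 : intVec ((snf.bN i : Fin n → ℤ)) ∈
        Submodule.span ℝ (intVec '' Set.range E) := intVec_span_le (snf.bN i).2
    rw [snf.snf i, intVec_zsmul] at h1
    have ha : ((snf.a i : ℤ) : ℝ) ≠ 0 := by
      exact_mod_cast snf_a_ne_zero snf i
    have h2 := Submodule.smul_mem (Submodule.span ℝ (intVec '' Set.range E))
      ((snf.a i : ℝ))⁻¹ h1
    rwa [smul_smul, inv_mul_cancel₀ ha, one_smul] at h2

lemma snf_coord_vanish {w : Fin n → ℤ}
    (hw : intVec w ∈ Submodule.span ℝ (Set.range (fun i => intVec (snf.bM (snf.f i)))))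
    {j : Fin n} (hj : j ∉ Set.range snf.f) : snf.bM.repr w j = 0 := by
  classical
  obtain ⟨c, hc⟩ := (Submodule.mem_span_range_iff_exists_fun ℝ).mp hw
  have hrep : intVec w = ∑ j', ((snf.bM.repr w j' : ℤ) : ℝ) • intVec (snf.bM j') := by
    funext i
    have hw' : w i = ∑ j', snf.bM.repr w j' * snf.bM j' i := by
      conv_lhs => rw [← snf.bM.sum_repr w]
      simp [Finset.sum_apply]
    show ((w i : ℤ) : ℝ) = _
    rw [hw']
    push_cast
    simp [Finset.sum_apply, intVec]
  set v : Fin n → V n := fun j' => intVec (snf.bM j') with hv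
  set d : Fin n → ℝ := fun j' => if h : ∃ i, snf.f i = j' then c h.choose else 0 with hd
  have hdsum : ∑ j', d j' • v j' = ∑ i, c i • v (snf.f i) := by
    rw [← Finset.sum_subset (Finset.subset_univ (Finset.univ.image snf.f))
      (fun j' _ hj' => ?_), Finset.sum_image (fun i _ i' _ h => snf.f.injective h)]
    · refine Finset.sum_congr rfl fun i _ => ?_
      have hex : ∃ i', snf.f i' = snf.f i := ⟨i, rfl⟩
      have : hex.choose = i := snf.f.injective hex.choose_spec
      simp [hd, dif_pos hex, this]
    · have : ¬∃ i, snf.f i = j' := by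
        intro ⟨i, hi⟩; exact hj' (Finset.mem_image.mpr ⟨i, Finset.mem_univ i, hi⟩)
      simp [hd, dif_neg this]
  have hli := snf_bM_li snf
  have hzero : ∑ j', (((snf.bM.repr w j' : ℤ) : ℝ) - d j') • v j' = 0 := by
    simp only [sub_smul, Finset.sum_sub_distrib]
    rw [← hrep, hdsum, hc, sub_self]
  have hall := Fintype.linearIndependent_iff.mp hli
    (fun j' => ((snf.bM.repr w j' : ℤ) : ℝ) - d j') hzero j
  have hdj : d j = 0 := by
    have : ¬∃ i, snf.f i = j := by simpa [Set.mem_range] using hj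
    simp [hd, dif_neg this]
  rw [hdj, sub_zero] at hall
  exact_mod_cast hall

lemma snf_units_iff_comap :
    (∀ i, IsUnit (snf.a i)) ↔
      (∀ w : Fin n → ℤ, intVec w ∈ Submodule.span ℝ (intVec '' Set.range E) →
        w ∈ Submodule.span ℤ (Set.range E)) := by
  constructor
  · intro hu w hw
    rw [snf_W_eq snf] at hw
    rw [snf_mem_iff snf]
    exact ⟨fun j hj => snf_coord_vanish snf hw hj, fun i => (hu i).dvd⟩
  · intro hC i
    have hv : intVec (snf.bM (snf.f i)) ∈ Submodule.span ℝ (intVec '' Set.range E) := by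
      rw [snf_W_eq snf]; exact Submodule.subset_span ⟨i, rfl⟩
    have hm := hC _ hv
    rw [snf_mem_iff snf] at hm
    have h1 := hm.2 i
    rw [Module.Basis.repr_self, Finsupp.single_eq_same] at h1
    exact isUnit_of_dvd_one h1



lemma snf_units_iff_sat :
    SatSub (LinearMap.range (phiA E)) ↔ (∀ i, IsUnit (snf.a i)) := by
  classical
  have ha := snf_a_ne_zero snf
  have hEN : ∀ ρ, E ρ ∈ Submodule.span ℤ (Set.range E) :=
    fun ρ => Submodule.subset_span ⟨ρ, rfl⟩
  set g : Fin r → R → ℤ := fun i ρ => snf.bN.repr ⟨E ρ, hEN ρ⟩ i with hg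
  have hrepE : ∀ ρ (i : Fin r), snf.bM.repr (E ρ) (snf.f i) = snf.a i * g i ρ := by
    intro ρ i
    have h := snf.repr_apply_embedding_eq_repr_smul (m := ⟨E ρ, hEN ρ⟩) (i := i)
    rw [h, map_smul, Finsupp.smul_apply, smul_eq_mul]
  have hrep0 : ∀ ρ (j : Fin n), j ∉ Set.range snf.f → snf.bM.repr (E ρ) j = 0 :=
    fun ρ j hj => snf.repr_eq_zero_of_notMem_range (m := ⟨E ρ, hEN ρ⟩) hj
  have hphi : ∀ ℓ : Fin n → ℤ, phiA E ℓ =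
      ∑ i, (∑ k, ℓ k * snf.bM (snf.f i) k) • (snf.a i • g i) := by
    intro ℓ
    funext ρ
    have h1 : ∀ k, E ρ k = ∑ j, snf.bM.repr (E ρ) j * snf.bM j k := by
      intro k
      conv_lhs => rw [← snf.bM.sum_repr (E ρ)]
      rw [Finset.sum_apply]
      simp
    have h2 : (∑ k, ℓ k * E ρ k) =
        ∑ j, snf.bM.repr (E ρ) j * (∑ k, ℓ k * snf.bM j k) := by
      simp_rw [h1, Finset.mul_sum]
      rw [Finset.sum_comm]
      refine Finset.sum_congr rfl fun j _ => ?_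
      exact Finset.sum_congr rfl fun k _ => by ring
    have h3 : (∑ j, snf.bM.repr (E ρ) j * (∑ k, ℓ k * snf.bM j k))
        = ∑ i, (snf.a i * g i ρ) * (∑ k, ℓ k * snf.bM (snf.f i) k) := by
      rw [← Finset.sum_subset (Finset.subset_univ (Finset.univ.image snf.f))
        (fun j _ hj => ?_), Finset.sum_image (fun i _ i' _ h => snf.f.injective h)]
      · exact Finset.sum_congr rfl fun i _ => by rw [hrepE]
      · have : j ∉ Set.range snf.f := by
          intro ⟨i, hi⟩; exact hj (Finset.mem_image.mpr ⟨i, Finset.mem_univ i, hi⟩)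
        rw [hrep0 ρ j this, zero_mul]
    show (∑ k, ℓ k * E ρ k) = _
    rw [h2, h3, Finset.sum_apply]
    exact Finset.sum_congr rfl fun i _ => by
      rw [Pi.smul_apply, Pi.smul_apply, smul_eq_mul, smul_eq_mul]; ring
  have hspan : LinearMap.range (phiA E) =
      Submodule.span ℤ (Set.range (fun i => snf.a i • g i)) := by
    apply le_antisymm
    · rintro _ ⟨ℓ, rfl⟩
      rw [hphi]
      exact Submodule.sum_mem _ fun i _ =>
        Submodule.smul_mem _ _ (Submodule.subset_span ⟨i, rfl⟩)
    · rw [Submodule.span_le]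
      rintro _ ⟨i₀, rfl⟩
      set ℓ : Fin n → ℤ := fun k => snf.bM.coord (snf.f i₀) (Pi.single k 1) with hℓ
      have hLf : ∀ i, (∑ k, ℓ k * snf.bM (snf.f i) k) = if i = i₀ then 1 else 0 := by
        intro i
        have hkey : snf.bM.coord (snf.f i₀) (snf.bM (snf.f i)) =
            ∑ k, snf.bM (snf.f i) k • (snf.bM.coord (snf.f i₀) (Pi.single k (1:ℤ))) := by
          conv_lhs => rw [← pi_sum_single (snf.bM (snf.f i))]
          rw [map_sum]
          exact Finset.sum_congr rfl fun k _ => by rw [map_smul]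
        have h5 : (∑ k, ℓ k * snf.bM (snf.f i) k) =
            snf.bM.coord (snf.f i₀) (snf.bM (snf.f i)) := by
          rw [hkey]
          exact Finset.sum_congr rfl fun k _ => by rw [smul_eq_mul]; ring
        rw [h5, Module.Basis.coord_apply, Module.Basis.repr_self, Finsupp.single_apply]
        by_cases h : i = i₀
        · subst h; simp
        · have h6 : ¬ (snf.f i = snf.f i₀) := fun hh => h (snf.f.injective hh)
          simp [h6, h]
      refine ⟨ℓ, ?_⟩
      rw [hphi ℓ]
      rw [Finset.sum_congr rfl fun i _ => by rw [hLf i]]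
      rw [Finset.sum_eq_single i₀ (fun i _ hi => by simp [hi]) (by simp)]
      simp
  have hdual : ∀ i₀ : Fin r, ∃ u : R → ℤ, ∀ i,
      dotL u (g i) = if i = i₀ then 1 else 0 := by
    intro i₀
    obtain ⟨c, hc⟩ := (Submodule.mem_span_range_iff_exists_fun ℤ).mp (snf.bN i₀).2
    refine ⟨c, fun i => ?_⟩
    have happ : snf.bM.repr (∑ ρ, c ρ • E ρ) (snf.f i) =
        snf.bM.repr ((snf.bN i₀ : Fin n → ℤ)) (snf.f i) := by rw [hc]
    have hL : snf.bM.repr (∑ ρ, c ρ • E ρ) (snf.f i) =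
        snf.a i * (∑ ρ, g i ρ * c ρ) := by
      rw [map_sum, Finsupp.finset_sum_apply]
      have h7 : ∀ ρ, (snf.bM.repr (c ρ • E ρ)) (snf.f i) = c ρ * (snf.a i * g i ρ) :=
        fun ρ => by rw [map_smul, Finsupp.smul_apply, smul_eq_mul, hrepE]
      rw [Finset.sum_congr rfl fun ρ _ => h7 ρ, Finset.mul_sum]
      exact Finset.sum_congr rfl fun ρ _ => by ring
    have hR : snf.bM.repr ((snf.bN i₀ : Fin n → ℤ)) (snf.f i) =
        snf.a i * (if i = i₀ then 1 else 0) := by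
      rw [snf.snf i₀, map_smul, Finsupp.smul_apply, smul_eq_mul, Module.Basis.repr_self,
        Finsupp.single_apply]
      by_cases h : i = i₀
      · subst h; simp
      · have h6 : ¬ (snf.f i₀ = snf.f i) := fun hh => h (snf.f.injective hh).symm
        simp [h6, h]
    rw [hL, hR] at happ
    have h8 := mul_left_cancel₀ (ha i) happ
    simpa [dotL] using h8
  choose U hU using hdual
  have hdotsum : ∀ (u : R → ℤ) (t : Fin r → ℤ),
      dotL u (∑ i, t i • (snf.a i • g i)) = ∑ i, t i * (snf.a i * dotL u (g i)) := by
    intro u t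
    rw [map_sum]
    exact Finset.sum_congr rfl fun i _ => by
      rw [map_smul, map_smul, smul_eq_mul, smul_eq_mul]
  constructor
  · intro hsat i₀
    by_contra hnu
    have hna : (snf.a i₀).natAbs ≠ 1 := by
      intro h; exact hnu (Int.isUnit_iff_natAbs_eq.mpr h)
    obtain ⟨p, hp, hq⟩ := Int.exists_prime_and_dvd hna
    obtain ⟨q, hqq⟩ := hq
    have hpmem : p • (q • g i₀) ∈ LinearMap.range (phiA E) := by
      rw [hspan, smul_smul, ← hqq]
      exact Submodule.subset_span ⟨i₀, rfl⟩
    have hx := hsat _ p hp.ne_zero hpmem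
    rw [hspan] at hx
    obtain ⟨t, ht⟩ := (Submodule.mem_span_range_iff_exists_fun ℤ).mp hx
    have h9 := congrArg (dotL (U i₀)) ht
    rw [hdotsum] at h9
    have h9' : ∑ i, t i * (snf.a i * dotL (U i₀) (g i)) = t i₀ * snf.a i₀ := by
      rw [Finset.sum_eq_single i₀
        (fun i _ hi => by rw [hU i₀ i, if_neg hi, mul_zero, mul_zero]) (by simp),
        hU i₀ i₀, if_pos rfl, mul_one]
    have h9'' : dotL (U i₀) (q • g i₀) = q := by
      rw [map_smul, smul_eq_mul, hU i₀ i₀, if_pos rfl, mul_one]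
    rw [h9', h9''] at h9
    rw [hqq] at h9
    have hqne : q ≠ 0 := by
      intro h0; rw [h0, mul_zero] at hqq; exact ha i₀ hqq
    have h10 : q * (t i₀ * p) = q * 1 := by linear_combination h9
    have h11 := mul_left_cancel₀ hqne h10
    exact hp.not_unit (IsUnit.of_mul_eq_one (a := p) (t i₀) (by rw [mul_comm]; exact h11))
  · intro hu x m hm hmx
    rw [hspan] at hmx ⊢
    obtain ⟨t, ht⟩ := (Submodule.mem_span_range_iff_exists_fun ℤ).mp hmx
    set s : Fin r → ℤ := fun j => dotL (U j) x with hs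
    have hta : ∀ j, t j * snf.a j = m * s j := by
      intro j
      have h9 := congrArg (dotL (U j)) ht
      rw [hdotsum] at h9
      have h9' : ∑ i, t i * (snf.a i * dotL (U j) (g i)) = t j * snf.a j := by
        rw [Finset.sum_eq_single j
          (fun i _ hi => by rw [hU j i, if_neg hi, mul_zero, mul_zero]) (by simp),
          hU j j, if_pos rfl, mul_one]
      have h9'' : dotL (U j) (m • x) = m * s j := by rw [map_smul, smul_eq_mul, hs]
      rw [h9', h9''] at h9
      exact h9
    have hxe : x = ∑ j, s j • g j := by
      have h12 : m • (∑ j, s j • g j) = m • x := by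
        rw [Finset.smul_sum]
        have h13 : ∀ j, m • (s j • g j) = t j • (snf.a j • g j) := by
          intro j
          rw [smul_smul, smul_smul, ← hta j]
        rw [Finset.sum_congr rfl fun j _ => h13 j, ht]
      exact (smul_right_injective (R → ℤ) hm h12).symm

    rw [hxe]
    refine Submodule.sum_mem _ fun j _ => ?_
    obtain ⟨b, hb⟩ := isUnit_iff_exists_inv'.mp (hu j)
    have : g j = b • (snf.a j • g j) := by
      rw [smul_smul, hb, one_smul]
    rw [this]
    exact Submodule.smul_mem _ _ (Submodule.smul_mem _ _ (Submodule.subset_span ⟨j, rfl⟩))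


end Core


section Geom
variable {n : ℕ} {F : Finset (Set (V n))} {e : Set (V n) → Fin n → ℤ}

lemma ray_mem_F {ρ : Set (V n)} (hρ : ρ ∈ raysF F) : ρ ∈ F := (Finset.mem_filter.mp hρ).1

lemma ray_dim {ρ : Set (V n)} (hρ : ρ ∈ raysF F) : dimC ρ = 1 := (Finset.mem_filter.mp hρ).2

lemma cone_zero_mem {σ : Set (V n)} (h : IsRationalCone σ) : (0 : V n) ∈ σ := by
  obtain ⟨S, rfl⟩ := h
  exact ⟨fun _ => 0, fun v => le_refl 0, by simp⟩

lemma cone_smul_mem {σ : Set (V n)} (h : IsRationalCone σ) {x : V n} (hx : x ∈ σ)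
    {t : ℝ} (ht : 0 ≤ t) : t • x ∈ σ := by
  obtain ⟨S, rfl⟩ := h
  obtain ⟨lam, hlam, rfl⟩ := hx
  refine ⟨fun v => t * lam v, fun v => mul_nonneg ht (hlam v), ?_⟩
  rw [Finset.smul_sum]
  exact Finset.sum_congr rfl fun v _ => (smul_smul t (lam v) _)

lemma ray_gen_ne (he : ∀ ρ ∈ raysF F, IsPrimitiveGen ρ (e ρ)) {ρ : Set (V n)}
    (hρ : ρ ∈ raysF F) : intVec (e ρ) ≠ 0 := by
  intro h
  apply (he ρ hρ).1
  funext i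
  have := congrFun h i
  simpa [intVec] using this

lemma ray_span_eq (he : ∀ ρ ∈ raysF F, IsPrimitiveGen ρ (e ρ)) {ρ : Set (V n)}
    (hρ : ρ ∈ raysF F) :
    Submodule.span ℝ ρ = Submodule.span ℝ {intVec (e ρ)} := by
  have hvne := ray_gen_ne he hρ
  have hle : Submodule.span ℝ {intVec (e ρ)} ≤ Submodule.span ℝ ρ :=
    Submodule.span_mono (Set.singleton_subset_iff.mpr (he ρ hρ).2.1)
  have hfr1 : Module.finrank ℝ (Submodule.span ℝ {intVec (e ρ)}) = 1 :=
    finrank_span_singleton hvne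
  have hfr2 : Module.finrank ℝ (Submodule.span ℝ ρ) = 1 := ray_dim hρ
  exact (Submodule.eq_of_le_of_finrank_eq hle (by rw [hfr1, hfr2])).symm

lemma ray_coeff (hFa : IsFan F) (he : ∀ ρ ∈ raysF F, IsPrimitiveGen ρ (e ρ))
    {ρ : Set (V n)} (hρ : ρ ∈ raysF F) {x : V n} (hx : x ∈ ρ) :
    ∃ c : ℝ, 0 ≤ c ∧ x = c • intVec (e ρ) := by
  have hxs : x ∈ Submodule.span ℝ ρ := Submodule.subset_span hx
  rw [ray_span_eq he hρ] at hxs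
  obtain ⟨c, hc⟩ := Submodule.mem_span_singleton.mp hxs
  rcases le_or_gt 0 c with h0 | h0
  · exact ⟨c, h0, hc.symm⟩
  · have hneg : -x ∈ ρ := by
      have h1 : (-c) • intVec (e ρ) ∈ ρ :=
        cone_smul_mem (hFa.rat ρ (ray_mem_F hρ)) (he ρ hρ).2.1 (by linarith)
      rw [show -x = (-c) • intVec (e ρ) by rw [← hc]; rw [neg_smul]]
      exact h1
    have hmem : x ∈ ρ ∩ (-ρ) := ⟨hx, by rwa [Set.mem_neg]⟩
    have hsc : ρ ∩ (-ρ) = {0} := hFa.convex ρ (ray_mem_F hρ)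
    rw [hsc, Set.mem_singleton_iff] at hmem
    exact ⟨0, le_refl 0, by rw [hmem, zero_smul]⟩

lemma ray_sub_ray (hFa : IsFan F) (he : ∀ ρ ∈ raysF F, IsPrimitiveGen ρ (e ρ))
    {ρ ρ' : Set (V n)} (hρ : ρ ∈ raysF F) (hρ' : ρ' ∈ raysF F) (hsub : ρ' ⊆ ρ) :
    ρ' = ρ := by
  have hface := hFa.inter_face_left ρ (ray_mem_F hρ) ρ' (ray_mem_F hρ')
  rw [Set.inter_eq_self_of_subset_right hsub] at hface
  obtain ⟨ℓ, hpos, heq⟩ := hface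
  have hv' : intVec (e ρ') ∈ ρ' := (he ρ' hρ').2.1
  have hvlat : memLat ρ (e ρ') := Submodule.subset_span (hsub hv')
  obtain ⟨k, hk⟩ := (he ρ hρ).2.2 (e ρ') hvlat
  have hkne : k ≠ 0 := by
    intro h0
    rw [h0, zero_smul] at hk
    exact (he ρ' hρ').1 hk
  have hℓv' : ℓ (intVec (e ρ')) = 0 := by
    have h2 : intVec (e ρ') ∈ ρ ∩ {x | ℓ x = 0} := by rw [← heq]; exact hv'
    exact h2.2
  have hℓv : ℓ (intVec (e ρ)) = 0 := by
    rw [hk, intVec_zsmul, map_smul, smul_eq_mul] at hℓv'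
    have hkR : (k : ℝ) ≠ 0 := Int.cast_ne_zero.mpr hkne
    exact (mul_eq_zero.mp hℓv').resolve_left hkR
  have hsup : ρ ⊆ ρ' := by
    intro x hx
    obtain ⟨c, _, rfl⟩ := ray_coeff hFa he hρ hx
    rw [heq]
    exact ⟨hx, by simp [map_smul, hℓv]⟩
  exact le_antisymm hsub hsup

lemma zero_cone_mem (hFa : IsFan F) (he : ∀ ρ ∈ raysF F, IsPrimitiveGen ρ (e ρ))
    {ρ : Set (V n)} (hρ : ρ ∈ raysF F) : ({0} : Set (V n)) ∈ F := by
  have hvne := ray_gen_ne he hρ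
  have hex : ∃ i₀, intVec (e ρ) i₀ ≠ 0 := by
    by_contra h0
    push_neg at h0
    exact hvne (funext h0)
  obtain ⟨i₀, hi₀⟩ := hex
  set ℓ : V n →ₗ[ℝ] ℝ := (intVec (e ρ) i₀)⁻¹ • (LinearMap.proj i₀) with hℓ
  have hval : ∀ c : ℝ, ℓ (c • intVec (e ρ)) = c := by
    intro c
    rw [hℓ]
    simp only [LinearMap.smul_apply, LinearMap.proj_apply, Pi.smul_apply, smul_eq_mul]
    field_simp
  apply hFa.faces_mem ρ (ray_mem_F hρ)
  refine ⟨ℓ, ?_, ?_⟩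
  · intro x hx
    obtain ⟨c, hc, rfl⟩ := ray_coeff hFa he hρ hx
    rw [hval]
    exact hc
  · apply Set.eq_of_subset_of_subset
    · intro x hx
      rw [Set.mem_singleton_iff] at hx
      subst hx
      exact ⟨cone_zero_mem (hFa.rat ρ (ray_mem_F hρ)), by simp⟩
    · rintro x ⟨hx, hℓx⟩
      obtain ⟨c, _, rfl⟩ := ray_coeff hFa he hρ hx
      rw [Set.mem_setOf_eq, hval] at hℓx
      rw [Set.mem_singleton_iff, hℓx, zero_smul]

lemma formsCone_empty (hFa : IsFan F) (he : ∀ ρ ∈ raysF F, IsPrimitiveGen ρ (e ρ)) :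
    FormsCone F (∅ : Finset (RayT F)) := by
  rcases Finset.eq_empty_or_nonempty (raysF F) with hemp | ⟨ρ₀, hρ₀⟩
  · obtain ⟨σ, hσ⟩ := hFa.nonempty
    exact ⟨σ, hσ, fun ρ =>
      absurd ρ.2 (Finset.eq_empty_iff_forall_notMem.mp hemp ρ.1)⟩
  · refine ⟨{0}, zero_cone_mem hFa he hρ₀, fun ρ => ?_⟩
    constructor
    · intro h; exact absurd h (Finset.notMem_empty _)
    · intro h
      exfalso
      have := h ((he ρ.1 ρ.2).2.1)
      rw [Set.mem_singleton_iff] at this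
      exact ray_gen_ne he ρ.2 this

lemma formsCone_singleton (hFa : IsFan F) (he : ∀ ρ ∈ raysF F, IsPrimitiveGen ρ (e ρ))
    (ρ : RayT F) : FormsCone F ({ρ} : Finset (RayT F)) := by
  refine ⟨ρ.1, ray_mem_F ρ.2, fun ρ'' => ?_⟩
  rw [Finset.mem_singleton]
  constructor
  · rintro rfl; exact subset_rfl
  · intro h
    exact Subtype.ext (ray_sub_ray hFa he ρ.2 ρ''.2 h)

lemma span_supp_eq (hFa : IsFan F) (he : ∀ ρ ∈ raysF F, IsPrimitiveGen ρ (e ρ))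
    (hu : IsUnimodular F e) :
    Submodule.span ℝ (suppF F) =
      Submodule.span ℝ (intVec '' {v : Fin n → ℤ | ∃ ρ ∈ raysF F, v = e ρ}) := by
  apply le_antisymm
  · rw [Submodule.span_le]
    rintro x ⟨σ, hσ, hxσ⟩
    have hs := hu.1 σ hσ
    rw [hs.2] at hxσ
    obtain ⟨y, hy, rfl⟩ := hxσ
    apply Submodule.sum_mem
    intro ρ hρc
    have hρr : ρ ∈ raysF F := (Finset.mem_filter.mp hρc).1
    obtain ⟨c, _, hyc⟩ := ray_coeff hFa he hρr (hy ρ hρc)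
    rw [hyc]
    exact Submodule.smul_mem _ _
      (Submodule.subset_span ⟨e ρ, ⟨ρ, hρr, rfl⟩, rfl⟩)
  · rw [Submodule.span_le]
    rintro _ ⟨_, ⟨ρ, hρ, rfl⟩, rfl⟩
    apply Submodule.subset_span
    exact ⟨ρ, Finset.mem_coe.mpr (ray_mem_F hρ), (he ρ hρ).2.1⟩

end Geom


section Chow
variable {n : ℕ} {F : Finset (Set (V n))} {e : Set (V n) → Fin n → ℤ}

lemma xLin_eq_linOf (ℓ : Fin n → ℤ) :
    xLin F e ℓ = linOf (fun ρ : RayT F => pairZ ℓ (e ρ.1)) := rfl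

lemma homComp_one_ideal_mem (hFa : IsFan F) (he : ∀ ρ ∈ raysF F, IsPrimitiveGen ρ (e ρ)) :
    ∀ q ∈ chowIdeal F e, ∀ a : MvPolynomial (RayT F) ℤ,
      MvPolynomial.homogeneousComponent 1 (a * q) ∈
        Submodule.span ℤ {p : MvPolynomial (RayT F) ℤ | ∃ ℓ : Fin n → ℤ, p = xLin F e ℓ} := by
  intro q hq
  have hsp : chowIdeal F e = Ideal.span
      ({p : MvPolynomial (RayT F) ℤ |
          ∃ S : Finset (RayT F), ¬ FormsCone F S ∧ p = ∏ ρ ∈ S, MvPolynomial.X ρ} ∪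
       {p : MvPolynomial (RayT F) ℤ | ∃ ℓ : Fin n → ℤ, p = xLin F e ℓ}) := by
    rw [Ideal.span_union]
    rw [chowIdeal, idealI, idealJ]
    exact Submodule.add_eq_sup _ _
  rw [hsp] at hq
  induction hq using Submodule.span_induction with
  | mem p hp =>
      intro a
      rcases hp with hpI | hpJ
      · obtain ⟨S, hnc, rfl⟩ := hpI
        have hc0 : S.card ≠ 0 := fun h => hnc (Finset.card_eq_zero.mp h ▸ formsCone_empty hFa he)
        have hc1 : S.card ≠ 1 := by
          intro h
          obtain ⟨ρ, hρ⟩ := Finset.card_eq_one.mp h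
          exact hnc (hρ ▸ formsCone_singleton hFa he ρ)
        have hg : (∏ ρ ∈ S, MvPolynomial.X ρ : MvPolynomial (RayT F) ℤ).IsHomogeneous S.card := by
          have h1 := MvPolynomial.IsHomogeneous.prod S (fun ρ => MvPolynomial.X ρ)
            (fun _ => 1) (fun ρ _ => MvPolynomial.isHomogeneous_X ℤ ρ)
          simpa using h1
        rw [homComp_one_mul_of_two hg (by omega) a]
        exact Submodule.zero_mem _
      · obtain ⟨ℓ, rfl⟩ := hpJ
        rw [xLin_eq_linOf, homComp_one_mul_of_one (linOf_isHomogeneous _) a,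
          ← MvPolynomial.smul_eq_C_mul]
        exact Submodule.smul_mem _ _
          (Submodule.subset_span ⟨ℓ, (xLin_eq_linOf ℓ)⟩)
  | zero => intro a; rw [mul_zero, map_zero]; exact Submodule.zero_mem _
  | add x y _ _ ihx ihy =>
      intro a; rw [mul_add, map_add]; exact Submodule.add_mem _ (ihx a) (ihy a)
  | smul r x _ ih =>
      intro a
      rw [smul_eq_mul, ← mul_assoc]
      exact ih (a * r)

lemma apiece_rep {y : ChowRing F e} (hy : y ∈ Apiece F e 1) :
    ∃ P : MvPolynomial (RayT F) ℤ, P.IsHomogeneous 1 ∧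
      y = Ideal.Quotient.mk (chowIdeal F e) P := by
  induction hy using AddSubgroup.closure_induction with
  | mem x hx => exact hx
  | zero => exact ⟨0, MvPolynomial.isHomogeneous_zero _ _ _, (map_zero _).symm⟩
  | add x y _ _ ihx ihy =>
      obtain ⟨P, hP, rfl⟩ := ihx
      obtain ⟨P', hP', rfl⟩ := ihy
      exact ⟨P + P', hP.add hP', (map_add _ _ _).symm⟩
  | neg x _ ihx =>
      obtain ⟨P, hP, rfl⟩ := ihx
      exact ⟨-P, hP.neg, (map_neg _ _).symm⟩

end Chow

/-- For a unimodular fan `Σ` in `ℝ^n`, the abelian group `A¹(Σ)` is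
torsion-free if and only if the subgroup of `ℤ^n` generated by the primitive
generators `e_ρ`, `ρ ∈ Σ₁`, equals `ℤ^n ∩ span_ℝ(|Σ|)`. -/
theorem A1_torsionFree_iff {n : ℕ}
    (F : Finset (Set (V n))) (hF : IsFan F)
    (e : Set (V n) → Fin n → ℤ) (he : ∀ ρ ∈ raysF F, IsPrimitiveGen ρ (e ρ))
    (hu : IsUnimodular F e) :
    (∀ (y : Apiece F e 1) (m : ℤ), m • y = 0 → m = 0 ∨ y = 0) ↔
      AddSubgroup.closure {v : Fin n → ℤ | ∃ ρ ∈ raysF F, v = e ρ}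
        = AddSubgroup.comap (intVecHom n)
            (Submodule.span ℝ (suppF F)).toAddSubgroup := by
  classical
  set Efun : RayT F → (Fin n → ℤ) := fun ρ => e ρ.1 with hEfun
  have hEset : {v : Fin n → ℤ | ∃ ρ ∈ raysF F, v = e ρ} = Set.range Efun := by
    ext v
    constructor
    · rintro ⟨ρ, hρ, rfl⟩; exact ⟨⟨ρ, hρ⟩, rfl⟩
    · rintro ⟨⟨ρ, hρ⟩, rfl⟩; exact ⟨ρ, hρ, rfl⟩
  have hRHS : (AddSubgroup.closure {v : Fin n → ℤ | ∃ ρ ∈ raysF F, v = e ρ}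
        = AddSubgroup.comap (intVecHom n) (Submodule.span ℝ (suppF F)).toAddSubgroup) ↔
      (∀ w : Fin n → ℤ, intVec w ∈ Submodule.span ℝ (intVec '' Set.range Efun) →
        w ∈ Submodule.span ℤ (Set.range Efun)) := by
    rw [← Submodule.span_int_eq_addSubgroupClosure, hEset, span_supp_eq hF he hu, hEset]
    constructor
    · intro h w hw
      have h2 : w ∈ AddSubgroup.comap (intVecHom n)
          (Submodule.span ℝ (intVec '' Set.range Efun)).toAddSubgroup := hw
      rw [← h] at h2
      exact h2
    · intro hC
      ext w
      simp only [Submodule.mem_toAddSubgroup, AddSubgroup.mem_comap]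
      exact ⟨fun hw => intVec_span_le hw, fun hw => hC w hw⟩
  rw [hRHS]
  obtain ⟨r, snf⟩ :=
    (Submodule.span ℤ (Set.range Efun)).smithNormalForm (Pi.basisFun ℤ (Fin n))
  rw [← snf_units_iff_comap snf, ← snf_units_iff_sat snf]
  have hK := homComp_one_ideal_mem (F := F) (e := e) hF he
  set Q := Ideal.Quotient.mk (chowIdeal F e) with hQ
  have hthetaK : ∀ p ∈ Submodule.span ℤ
      {p : MvPolynomial (RayT F) ℤ | ∃ ℓ : Fin n → ℤ, p = xLin F e ℓ},
      thetaL (RayT F) p ∈ LinearMap.range (phiA Efun) := by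
    intro p hp
    induction hp using Submodule.span_induction with
    | mem x hx =>
        obtain ⟨ℓ, rfl⟩ := hx
        refine ⟨ℓ, ?_⟩
        rw [xLin_eq_linOf, theta_linOf]
        rfl
    | zero => rw [map_zero]; exact Submodule.zero_mem _
    | add x y _ _ hx hy => rw [map_add]; exact Submodule.add_mem _ hx hy
    | smul m x _ hx => rw [map_smul]; exact Submodule.smul_mem _ _ hx
  have hf1 : ∀ P : MvPolynomial (RayT F) ℤ, P.IsHomogeneous 1 →
      (Q P = 0 ↔ thetaL (RayT F) P ∈ LinearMap.range (phiA Efun)) := by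
    intro P hP
    constructor
    · intro h0
      have hPmem : P ∈ chowIdeal F e := Ideal.Quotient.eq_zero_iff_mem.mp h0
      have h1 := hK P hPmem 1
      rw [one_mul] at h1
      have h2 := hthetaK _ h1
      rwa [theta_homComp] at h2
    · rintro ⟨ℓ, hℓ⟩
      have hPeq : P = xLin F e ℓ := by
        rw [← linOf_theta hP, xLin_eq_linOf]
        congr 1
        rw [← hℓ]
        rfl
      rw [hPeq]
      apply Ideal.Quotient.eq_zero_iff_mem.mpr
      rw [chowIdeal, Submodule.add_eq_sup]
      exact Submodule.mem_sup_right (Ideal.subset_span ⟨ℓ, rfl⟩)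
  constructor
  · intro hTF x m hm hmx
    set P := linOf x with hP
    have hPhom := linOf_isHomogeneous x
    have hyA : Q P ∈ Apiece F e 1 := AddSubgroup.subset_closure ⟨P, hPhom, rfl⟩
    have hmP : (m • P).IsHomogeneous 1 := by
      rw [MvPolynomial.smul_eq_C_mul]
      exact hPhom.C_mul m
    have hth : thetaL (RayT F) (m • P) = m • x := by
      rw [map_smul, hP, theta_linOf]
    have hQm : Q (m • P) = 0 := by
      rw [hf1 _ hmP, hth]
      exact hmx
    have hzero : m • (⟨Q P, hyA⟩ : Apiece F e 1) = 0 := by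
      apply Subtype.ext
      show m • Q P = 0
      rw [← map_zsmul Q m P, hQm]
    rcases hTF ⟨Q P, hyA⟩ m hzero with h | h
    · exact absurd h hm
    · have h0 : Q P = 0 := Subtype.ext_iff.mp h
      have h1 := (hf1 P hPhom).mp h0
      rwa [hP, theta_linOf] at h1
  · intro hsat y m hmy
    by_cases hm : m = 0
    · exact Or.inl hm
    · right
      obtain ⟨P, hPhom, hPeq⟩ := apiece_rep y.2
      have hcoe : m • (y : ChowRing F e) = 0 := Subtype.ext_iff.mp hmy
      have hmP : (m • P).IsHomogeneous 1 := by
        rw [MvPolynomial.smul_eq_C_mul]; exact hPhom.C_mul m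
      have hQm : Q (m • P) = 0 := by
        rw [map_zsmul, ← hPeq]
        exact hcoe
      have h2 := (hf1 _ hmP).mp hQm
      rw [map_smul] at h2
      have h3 := hsat _ m hm h2
      have h4 := (hf1 P hPhom).mpr h3
      apply Subtype.ext
      show (y : ChowRing F e) = 0
      rw [hPeq]
      exact h4


end
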